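/- For all integers n, k, d with n ≥ k ≥ 1 and k ≤ d, the maximum number of intersecting pairs in a family of n axis-parallel boxes in ℝ^d such that no k+1 of the boxes have a point in common equals t(n, k), the number of edges of the Turán graph 𝒯(n, k). In particular, the Turán graph 𝒯(n, k) is realizable as the intersection graph of a family of n axis-parallel boxes in ℝ^d, no k+1 of which have a common point. -/

import Mathlib

/-- Number of edges of the Turán graph `𝒯(n, m)`, the complete `m`-partite graph on `n`
vertices whose vertex-class sizes are as equal as possible. -/
noncomputable def turanEdges (n m : ℕ) : ℕ :=
  (SimpleGraph.turanGraph n m).edgeFinset.card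

/-- `S ⊆ ℝ^d` is an axis-parallel box: a product `∏ᵢ [aᵢ, bᵢ]` with `aᵢ ≤ bᵢ`. -/
def IsBox {d : ℕ} (S : Set (Fin d → ℝ)) : Prop :=
  ∃ a b : Fin d → ℝ, (∀ i, a i ≤ b i) ∧
    S = Set.pi Set.univ (fun i => Set.Icc (a i) (b i))

/-- Number of intersecting pairs of an indexed family of sets: the number of unordered
pairs `{i, j}` with `i ≠ j` and `B i ∩ B j ≠ ∅`. -/
noncomputable def interPairs {n : ℕ} {α : Type*} (B : Fin n → Set α) : ℕ :=
  Set.ncard {p : Fin n × Fin n | p.1 < p.2 ∧ (B p.1 ∩ B p.2).Nonempty}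

open Finset in
lemma ncard_pairs_eq_edgeCard {n : ℕ} (G : SimpleGraph (Fin n)) [DecidableRel G.Adj] :
    Set.ncard {p : Fin n × Fin n | p.1 < p.2 ∧ G.Adj p.1 p.2} = G.edgeFinset.card := by
  classical
  have : {p : Fin n × Fin n | p.1 < p.2 ∧ G.Adj p.1 p.2} =
      ↑(Finset.univ.filter (fun p : Fin n × Fin n => p.1 < p.2 ∧ G.Adj p.1 p.2)) := by
    ext p; simp
  rw [this, Set.ncard_coe_finset]
  refine Finset.card_bij (fun (p : Fin n × Fin n) _ => Sym2.mk p.1 p.2) ?_ ?_ ?_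
  · intro p hp
    simp only [Finset.mem_filter] at hp
    simpa [SimpleGraph.mem_edgeFinset] using hp.2.2
  · intro p hp q hq h
    simp only [Finset.mem_filter] at hp hq
    rcases Sym2.mk_eq_mk_iff.1 h with h | h
    · exact h
    · exfalso
      have h1 : p.1 = q.2 := by rw [h]; rfl
      have h2 : p.2 = q.1 := by rw [h]; rfl
      have := hp.2.1
      rw [h1, h2] at this
      exact absurd (this.trans hq.2.1) (lt_irrefl _)
  · intro e he
    induction e with
    | _ x y =>
      rw [SimpleGraph.mem_edgeFinset, SimpleGraph.mem_edgeSet] at he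
      rcases lt_or_gt_of_ne he.ne with h | h
      · exact ⟨(x, y), by simp [h, he], rfl⟩
      · exact ⟨(y, x), by simp [h, he.symm], Sym2.eq_swap⟩

/-- For `n ≥ k ≥ 1` with `k ≤ d`, the maximal number of intersecting pairs in a family of
`n` axis-parallel boxes in `ℝ^d`, no `k+1` of which have a common point, equals `t(n, k)`;
in particular the Turán graph `𝒯(n,k)` is realizable as the intersection graph of such a
family. -/
theorem boxes_extremal_small_k (n k d : ℕ) (hkn : k ≤ n) (hk : 1 ≤ k) (hkd : k ≤ d) :
    (∀ B : Fin n → Set (Fin d → ℝ), (∀ i, IsBox (B i)) →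
        (∀ x : Fin d → ℝ, Set.ncard {i | x ∈ B i} ≤ k) →
        interPairs B ≤ turanEdges n k) ∧
    (∃ B : Fin n → Set (Fin d → ℝ), (∀ i, IsBox (B i)) ∧
        (∀ x : Fin d → ℝ, Set.ncard {i | x ∈ B i} ≤ k) ∧
        interPairs B = turanEdges n k) := by
  classical
  constructor
  · -- Upper bound
    intro B hbox hdepth
    choose a b hab hBeq using hbox
    have hmem : ∀ i (x : Fin d → ℝ), x ∈ B i ↔ ∀ j, a i j ≤ x j ∧ x j ≤ b i j := by
      intro i x
      rw [hBeq i]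
      simp [Set.mem_pi, Set.mem_Icc, Pi.le_def, forall_and]
    set G : SimpleGraph (Fin n) :=
      { Adj := fun i j => i ≠ j ∧ (B i ∩ B j).Nonempty
        symm := by
          constructor
          intro i j h
          exact ⟨h.1.symm, by rw [Set.inter_comm]; exact h.2⟩
        loopless := ⟨fun i h => h.1 rfl⟩ } with hG
    haveI : DecidableRel G.Adj := Classical.decRel _
    have hcf : G.CliqueFree (k + 1) := by
      intro t ht
      have hcard : t.card = k + 1 := ht.2
      have hne : t.Nonempty := Finset.card_pos.mp (by omega)
      -- key pairwise inequality
      have key : ∀ i ∈ t, ∀ i' ∈ t, ∀ j, a i' j ≤ b i j := by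
        intro i hi i' hi' j
        by_cases hii : i' = i
        · subst hii; exact hab i' j
        · have hadj : G.Adj i' i := ht.1 hi' hi hii
          obtain ⟨y, hy1, hy2⟩ := hadj.2
          exact le_trans ((hmem i' y).1 hy1 j).1 ((hmem i y).1 hy2 j).2
      set x : Fin d → ℝ := fun j => t.sup' hne (fun i => a i j) with hx
      have hxin : ∀ i ∈ t, x ∈ B i := by
        intro i hi
        rw [hmem]
        intro j
        constructor
        · exact Finset.le_sup' (fun i => a i j) hi
        · exact Finset.sup'_le hne _ (fun i' hi' => key i hi i' hi' j)
      have hsub : (↑t : Set (Fin n)) ⊆ {i | x ∈ B i} := fun i hi => hxin i hi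
      have hle : (↑t : Set (Fin n)).ncard ≤ Set.ncard {i | x ∈ B i} :=
        Set.ncard_le_ncard hsub (Set.toFinite _)
      rw [Set.ncard_coe_finset, hcard] at hle
      have := hdepth x
      omega
    have hpairs : interPairs B = G.edgeFinset.card := by
      rw [interPairs, ← ncard_pairs_eq_edgeCard G]
      congr 1
      ext p
      simp only [Set.mem_setOf_eq, hG]
      constructor
      · rintro ⟨h1, h2⟩; exact ⟨h1, ne_of_lt h1, h2⟩
      · rintro ⟨h1, _, h2⟩; exact ⟨h1, h2⟩
    rw [hpairs, turanEdges]
    exact (SimpleGraph.isTuranMaximal_turanGraph hk).2 hcf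
  · -- Construction
    set c : Fin n → Fin d := fun v => ⟨v.val % k, lt_of_lt_of_le (Nat.mod_lt _ hk) hkd⟩
      with hc
    set A : Fin n → Fin d → ℝ := fun v j => if j = c v then (v.val / k : ℕ) else 0 with hA
    set C : Fin n → Fin d → ℝ := fun v j => if j = c v then (v.val / k : ℕ) else n with hC
    set B : Fin n → Set (Fin d → ℝ) :=
      fun v => Set.pi Set.univ (fun j => Set.Icc (A v j) (C v j)) with hB
    have hdivle : ∀ v : Fin n, ((v.val / k : ℕ) : ℝ) ≤ (n : ℝ) := by
      intro v
      exact_mod_cast le_of_lt (lt_of_le_of_lt (Nat.div_le_self _ _) v.isLt)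
    have hABle : ∀ v j, A v j ≤ C v j := by
      intro v j
      simp only [hA, hC]
      split
      · exact le_refl _
      · exact_mod_cast Nat.zero_le n
    have hmem : ∀ v (x : Fin d → ℝ), x ∈ B v ↔ ∀ j, A v j ≤ x j ∧ x j ≤ C v j := by
      intro v x
      simp [hB, Set.mem_pi, Set.mem_Icc, Pi.le_def, forall_and]
    have hval : ∀ v (x : Fin d → ℝ), x ∈ B v → x (c v) = ((v.val / k : ℕ) : ℝ) := by
      intro v x hx
      have := (hmem v x).1 hx (c v)
      simp only [hA, hC, if_pos rfl] at this
      linarith [this.1, this.2]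
    have huniq : ∀ v w : Fin n, v.val % k = w.val % k →
        (B v ∩ B w).Nonempty → v = w := by
      intro v w hmod ⟨x, hxv, hxw⟩
      have hcvw : c v = c w := by simp [hc, Fin.ext_iff, hmod]
      have h1 := hval v x hxv
      have h2 := hval w x hxw
      rw [hcvw] at h1
      have hdiv : v.val / k = w.val / k := by
        have := h1.symm.trans h2
        exact_mod_cast this
      exact Fin.ext (by rw [← Nat.div_add_mod v.val k, ← Nat.div_add_mod w.val k, hdiv, hmod])
    refine ⟨B, ?_, ?_, ?_⟩
    · intro v
      exact ⟨A v, C v, hABle v, rfl⟩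
    · -- depth at most k
      intro x
      have : Set.ncard {v : Fin n | x ∈ B v} ≤ (↑(Finset.range k) : Set ℕ).ncard := by
        apply Set.ncard_le_ncard_of_injOn (fun v => v.val % k)
        · intro v hv
          simp only [Finset.coe_range, Set.mem_Iio]
          exact Nat.mod_lt _ hk
        · intro v hv w hw hmod
          exact huniq v w hmod ⟨x, hv, hw⟩
      rwa [Set.ncard_coe_finset, Finset.card_range] at this
    · -- exact count
      rw [interPairs, turanEdges, ← ncard_pairs_eq_edgeCard]
      congr 1
      ext ⟨v, w⟩
      simp only [Set.mem_setOf_eq, SimpleGraph.turanGraph]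
      constructor
      · rintro ⟨hlt, hne⟩
        refine ⟨hlt, ?_⟩
        intro hmod
        have : (v : ℕ) % k = (w : ℕ) % k := by exact_mod_cast hmod
        exact absurd (huniq v w this hne) (ne_of_lt hlt)
      · rintro ⟨hlt, hmod⟩
        refine ⟨hlt, ?_⟩
        have hmodne : v.val % k ≠ w.val % k := by
          intro h; exact hmod (by exact_mod_cast h)
        have hcvw : c v ≠ c w := by
          simp only [hc, Ne, Fin.ext_iff]
          exact hmodne
        refine ⟨fun j => if j = c v then ((v.val / k : ℕ) : ℝ)
          else if j = c w then ((w.val / k : ℕ) : ℝ) else 0, ?_, ?_⟩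
        · rw [hmem]
          intro j
          by_cases hj : j = c v
          · simp [hA, hC, hj]
          · simp only [hA, hC, if_neg hj]
            by_cases hj' : j = c w
            · simp only [if_pos hj']
              exact ⟨by positivity, hdivle w⟩
            · simp only [if_neg hj']
              exact ⟨le_refl _, by exact_mod_cast Nat.zero_le n⟩
        · rw [hmem]
          intro j
          by_cases hj : j = c w
          · have : j ≠ c v := by rw [hj]; exact hcvw.symm
            simp [hA, hC, hj, hcvw.symm]
          · simp only [hA, hC, if_neg hj]
            by_cases hj' : j = c v
            · simp only [if_pos hj']
              exact ⟨by positivity, hdivle v⟩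
            · simp only [if_neg hj']
              exact ⟨le_refl _, by exact_mod_cast Nat.zero_le n⟩
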